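/- Let k be a field and X a type; in F := FreeLieAlgebra k (X ⊕ X), with plain generators x̄ := ι(Sum.inl x) and dotted generators ẋ := ι(Sum.inr x), let φ : F → F be the unique Lie algebra homomorphism with φ(x̄) = x̄ and φ(ẋ) = x̄ for all x ∈ X. Then the smallest k-submodule W of F that contains all dotted generators ẋ and is closed under the three tri-algebra operations (for all a, b ∈ W: ⁅φ(a), b⁆ ∈ W, ⁅a, φ(b)⁆ ∈ W, ⁅a, b⁆ ∈ W) coincides, as a submodule of F, with the Lie ideal of F generated by the set {ẋ : x ∈ X}. -/
import Mathlib

/-- Every element of a free Lie algebra lies in any Lie subalgebra containing the generators. -/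
lemma mem_of_lieSubalgebra_contains_gens {k : Type*} [Field k] {Y : Type*}
    (L : LieSubalgebra k (FreeLieAlgebra k Y))
    (h : ∀ y : Y, FreeLieAlgebra.of k y ∈ L) (a : FreeLieAlgebra k Y) : a ∈ L := by
  let f : Y → L := fun y => ⟨FreeLieAlgebra.of k y, h y⟩
  let g : FreeLieAlgebra k Y →ₗ⁅k⁆ FreeLieAlgebra k Y := L.incl.comp (FreeLieAlgebra.lift k f)
  have hg : g = LieHom.id := by
    apply FreeLieAlgebra.hom_ext
    intro y
    simp [g, f, FreeLieAlgebra.lift_of_apply]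
  have : g a = a := by rw [hg]; rfl
  rw [← this]
  exact (FreeLieAlgebra.lift k f a).2

/-- In the free Lie algebra on `X ⊕ X`, the sub-tri-algebra generated by the
dotted generators (the smallest submodule containing them closed under the three tri-algebra
operations) coincides with the Lie ideal generated by the dotted generators. -/
theorem trialgebra_closure_eq_lieIdeal (k : Type*) [Field k] (X : Type*)
    (φ : FreeLieAlgebra k (X ⊕ X) →ₗ⁅k⁆ FreeLieAlgebra k (X ⊕ X))
    (hφl : ∀ x : X, φ (FreeLieAlgebra.of k (Sum.inl x)) = FreeLieAlgebra.of k (Sum.inl x))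
    (hφr : ∀ x : X, φ (FreeLieAlgebra.of k (Sum.inr x)) = FreeLieAlgebra.of k (Sum.inl x)) :
    sInf {W : Submodule k (FreeLieAlgebra k (X ⊕ X)) |
        (∀ x : X, FreeLieAlgebra.of k (Sum.inr x) ∈ W) ∧
        ∀ a b : FreeLieAlgebra k (X ⊕ X), a ∈ W → b ∈ W →
          ⁅φ a, b⁆ ∈ W ∧ ⁅a, φ b⁆ ∈ W ∧ ⁅a, b⁆ ∈ W} =
      LieSubmodule.toSubmodule
        (LieSubmodule.lieSpan k (FreeLieAlgebra k (X ⊕ X))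
          (Set.range fun x : X => FreeLieAlgebra.of k (Sum.inr x))) := by
  set F := FreeLieAlgebra k (X ⊕ X)
  set I := LieSubmodule.lieSpan k F (Set.range fun x : X => (FreeLieAlgebra.of k (Sum.inr x) : F))
    with hI
  set S := sInf {W : Submodule k F |
      (∀ x : X, FreeLieAlgebra.of k (Sum.inr x) ∈ W) ∧
      ∀ a b : F, a ∈ W → b ∈ W → ⁅φ a, b⁆ ∈ W ∧ ⁅a, φ b⁆ ∈ W ∧ ⁅a, b⁆ ∈ W} with hS
  have hSmem : ∀ a b : F, a ∈ S → b ∈ S → ⁅φ a, b⁆ ∈ S ∧ ⁅a, φ b⁆ ∈ S ∧ ⁅a, b⁆ ∈ S := by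
    intro a b ha hb
    rw [hS, Submodule.mem_sInf] at ha hb
    refine ⟨?_, ?_, ?_⟩ <;> rw [hS] <;> rw [Submodule.mem_sInf] <;> intro W hW
    · exact (hW.2 a b (ha W hW) (hb W hW)).1
    · exact (hW.2 a b (ha W hW) (hb W hW)).2.1
    · exact (hW.2 a b (ha W hW) (hb W hW)).2.2
  have hgen : ∀ x : X, FreeLieAlgebra.of k (Sum.inr x) ∈ S := by
    intro x
    rw [hS, Submodule.mem_sInf]
    exact fun W hW => hW.1 x
  apply le_antisymm
  · -- S ≤ I : I is one of the W's
    apply sInf_le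
    refine ⟨fun x => LieSubmodule.subset_lieSpan ⟨x, rfl⟩, fun a b ha hb => ?_⟩
    exact ⟨I.lie_mem hb, by rw [← lie_skew]; exact I.toSubmodule.neg_mem (I.lie_mem ha),
      I.lie_mem hb⟩
  · -- I ≤ S : S is a Lie submodule containing the generators
    have key : ∀ (c a : F), a ∈ S → ⁅c, a⁆ ∈ S := by
      let L : LieSubalgebra k F :=
        { carrier := {c | ∀ a ∈ S, ⁅c, a⁆ ∈ S}
          zero_mem' := fun a _ => by simp [S.zero_mem]
          add_mem' := fun {c d} hc hd a ha => by
            rw [add_lie]; exact S.add_mem (hc a ha) (hd a ha)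
          smul_mem' := fun t c hc a ha => by
            rw [smul_lie]; exact S.smul_mem t (hc a ha)
          lie_mem' := fun {c d} hc hd a ha => by
            rw [lie_lie]
            exact S.sub_mem (hc _ (hd a ha)) (hd _ (hc a ha)) }
      have hLgen : ∀ y : X ⊕ X, FreeLieAlgebra.of k y ∈ L := by
        rintro (x | x) <;> intro a ha
        · rw [← hφr x]
          exact (hSmem _ a (hgen x) ha).1
        · exact (hSmem _ a (hgen x) ha).2.2
      intro c a ha
      exact mem_of_lieSubalgebra_contains_gens L hLgen c a ha
    let S' : LieSubmodule k F F :=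
      { S with lie_mem := fun {c a} ha => key c a ha }
    have : I ≤ S' := LieSubmodule.lieSpan_le.mpr (by rintro _ ⟨x, rfl⟩; exact hgen x)
    exact fun a ha => this ha
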